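/- With the operators O^r_α of the (ℤ₂)^q cocycle Hamiltonian as above, the qL operators {O^r_α : 0 ≤ r < L, 1 ≤ α ≤ q} are independent in the Pauli group (no nonempty product of a subset equals a scalar multiple of the identity); consequently the Hamiltonian H = −∑_{r,α} O^r_α has a unique ground state, the common +1 eigenspace being one-dimensional (dimension 2^{qL}/2^{qL} = 1). -/

import Mathlib

open Matrix

/-- Pauli `Z` on site `s` of the periodic chain. -/
noncomputable def Zop (L q : ℕ) [NeZero L] (s : ZMod L × Fin q) :
    Matrix ((ZMod L × Fin q) → Fin 2) ((ZMod L × Fin q) → Fin 2) ℂ :=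
  Matrix.diagonal (fun x => (-1 : ℂ) ^ ((x s : ℕ)))

/-- Pauli `X` on site `s` of the periodic chain. -/
noncomputable def Xop (L q : ℕ) [NeZero L] (s : ZMod L × Fin q) :
    Matrix ((ZMod L × Fin q) → Fin 2) ((ZMod L × Fin q) → Fin 2) ℂ :=
  fun x y => if x = Function.update y s (1 - y s) then 1 else 0

/-- The cocycle stabilizer
`O^r_α = ∏_{k<α}(Z^{r+1}_k Z^r_k)^{P_{kα}} · X^r_α · ∏_{α<l}(Z^r_l Z^{r−1}_l)^{P_{αl}}`,
written as the (diagonal) product of its `Z` factors times its `X` factor. -/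
noncomputable def Ocal (L q : ℕ) [NeZero L] (P : Fin q → Fin q → ℕ)
    (r : ZMod L) (α : Fin q) :
    Matrix ((ZMod L × Fin q) → Fin 2) ((ZMod L × Fin q) → Fin 2) ℂ :=
  Matrix.diagonal (fun x =>
      (∏ k ∈ Finset.univ.filter (fun k : Fin q => k < α),
        (-1 : ℂ) ^ (P k α * ((x (r + 1, k) : ℕ) + (x (r, k) : ℕ))))
      * ∏ l ∈ Finset.univ.filter (fun l : Fin q => α < l),
        (-1 : ℂ) ^ (P α l * ((x (r, l) : ℕ) + (x (r - 1, l) : ℕ))))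
    * Xop L q (r, α)


set_option linter.unusedSectionVars false

section Aux
variable {L q : ℕ} [NeZero L]

abbrev Cfg (L q : ℕ) := (ZMod L × Fin q) → Fin 2

def flipS (s : ZMod L × Fin q) (x : Cfg L q) : Cfg L q := Function.update x s (1 - x s)

lemma fin2_sub (a : Fin 2) : 1 - (1 - a) = a := by fin_cases a <;> rfl

lemma flipS_flipS (s : ZMod L × Fin q) (x : Cfg L q) : flipS s (flipS s x) = x := by
  funext t
  by_cases h : t = s
  · subst h; simp [flipS, Function.update_self, fin2_sub]
  · simp [flipS, Function.update_of_ne h]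

lemma flipS_eq_iff {s : ZMod L × Fin q} {x y : Cfg L q} :
    x = flipS s y ↔ y = flipS s x := by
  constructor <;> (rintro rfl; rw [flipS_flipS])

lemma Xop_mulVec (s : ZMod L × Fin q) (v : Cfg L q → ℂ) :
    (Xop L q s).mulVec v = fun x => v (flipS s x) := by
  funext x
  simp only [Matrix.mulVec, Xop, dotProduct]
  have : ∀ y : Cfg L q, (if x = Function.update y s (1 - y s) then (1:ℂ) else 0) * v y
      = if y = flipS s x then v y else 0 := by
    intro y
    rw [ite_mul, one_mul, zero_mul]
    exact if_congr flipS_eq_iff rfl rfl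
  simp only [this]
  simp

def Eexp (P : Fin q → Fin q → ℕ) (r : ZMod L) (α : Fin q) (x : Cfg L q) : ℕ :=
  (∑ k ∈ Finset.univ.filter (fun k : Fin q => k < α),
      P k α * ((x (r + 1, k) : ℕ) + (x (r, k) : ℕ)))
  + ∑ l ∈ Finset.univ.filter (fun l : Fin q => α < l),
      P α l * ((x (r, l) : ℕ) + (x (r - 1, l) : ℕ))

lemma Ocal_mulVec (P : Fin q → Fin q → ℕ) (r : ZMod L) (α : Fin q) (v : Cfg L q → ℂ) :
    (Ocal L q P r α).mulVec v
      = fun x => (-1 : ℂ) ^ (Eexp P r α x) * v (flipS (r, α) x) := by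
  funext x
  rw [Ocal, ← Matrix.mulVec_mulVec, Xop_mulVec, Matrix.mulVec_diagonal]
  congr 1
  rw [Finset.prod_pow_eq_pow_sum, Finset.prod_pow_eq_pow_sum, ← pow_add]
  rfl

def flipL (l : List (ZMod L × Fin q)) (x : Cfg L q) : Cfg L q :=
  l.foldl (fun y p => flipS p y) x

lemma prod_mulVec (P : Fin q → Fin q → ℕ) (l : List (ZMod L × Fin q)) :
    ∃ c : Cfg L q → ℂ, (∀ x, c x ≠ 0) ∧
      ∀ (v : Cfg L q → ℂ) (x : Cfg L q),
        ((l.map (fun p => Ocal L q P p.1 p.2)).prod).mulVec v x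
          = c x * v (flipL l x) := by
  induction l with
  | nil =>
      exact ⟨fun _ => 1, fun _ => one_ne_zero,
        fun v x => by simp [flipL, Matrix.one_mulVec]⟩
  | cons p t ih =>
      obtain ⟨c, hc, hcv⟩ := ih
      refine ⟨fun x => (-1 : ℂ) ^ (Eexp P p.1 p.2 x) * c (flipS p x), ?_, ?_⟩
      · intro x
        exact mul_ne_zero (pow_ne_zero _ (by norm_num)) (hc _)
      · intro v x
        rw [List.map_cons, List.prod_cons, ← Matrix.mulVec_mulVec, Ocal_mulVec]
        show (-1 : ℂ) ^ (Eexp P p.1 p.2 x) * _ = _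
        rw [hcv]
        rw [mul_assoc]
        rfl

lemma flipL_of_not_mem {l : List (ZMod L × Fin q)} {p : ZMod L × Fin q}
    (hp : p ∉ l) (x : Cfg L q) : flipL l x p = x p := by
  induction l generalizing x with
  | nil => rfl
  | cons a t ih =>
      have h2 : p ≠ a ∧ p ∉ t := by simpa [List.mem_cons, not_or] using hp
      show flipL t (flipS a x) p = x p
      rw [ih h2.2, flipS, Function.update_of_ne h2.1]

lemma flipL_of_mem {l : List (ZMod L × Fin q)} (hl : l.Nodup) {p : ZMod L × Fin q}
    (hp : p ∈ l) (x : Cfg L q) : flipL l x p = 1 - x p := by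
  induction l generalizing x with
  | nil => cases hp
  | cons a t ih =>
      rcases List.mem_cons.mp hp with rfl | hpt
      · have hnot : p ∉ t := (List.nodup_cons.mp hl).1
        show flipL t (flipS p x) p = 1 - x p
        rw [flipL_of_not_mem hnot, flipS, Function.update_self]
      · have hne : p ≠ a := by rintro rfl; exact (List.nodup_cons.mp hl).1 hpt
        show flipL t (flipS a x) p = 1 - x p
        rw [ih (List.nodup_cons.mp hl).2 hpt, flipS, Function.update_of_ne hne]

lemma part1 (P : Fin q → Fin q → ℕ) (s : Finset (ZMod L × Fin q))
    (hs : s.Nonempty) (cph : ℂ) :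
    (s.toList.map (fun p => Ocal L q P p.1 p.2)).prod ≠
      cph • (1 : Matrix (Cfg L q) (Cfg L q) ℂ) := by
  intro h
  obtain ⟨c, hc, hcv⟩ := prod_mulVec P s.toList
  obtain ⟨p, hp⟩ := hs
  have hmem : p ∈ s.toList := Finset.mem_toList.mpr hp
  set x0 : Cfg L q := fun _ => 0 with hx0
  have hy : x0 ≠ flipL s.toList x0 := by
    intro he
    have h1 := flipL_of_mem s.nodup_toList hmem x0
    rw [← he] at h1
    simp [hx0] at h1
  have h1 := hcv (Pi.single (flipL s.toList x0) 1 : Cfg L q → ℂ) x0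
  rw [h, Matrix.smul_mulVec, Matrix.one_mulVec] at h1
  rw [Pi.single_eq_same] at h1
  have h2 : (cph • (Pi.single (flipL s.toList x0) 1 : Cfg L q → ℂ)) x0 = 0 := by
    rw [Pi.smul_apply, Pi.single_eq_of_ne hy, smul_zero]
  rw [h2, mul_one] at h1
  exact hc x0 h1.symm

lemma z2_aux : ∀ p b1 b2 c d1 d2 d3 : ZMod 2, d1 * d3 = 0 → d2 * d3 = 0 →
    p * (b1 + b2) * c + p * ((b1 + d1) + (b2 + d2)) * (c + d3)
      = p * (b1 + b2) * d3 + (p * d1 * c + p * d2 * c) := by decide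

lemma sum_ite_const {ι : Type*} (c : Prop) [Decidable c] (s : Finset ι) (f : ι → ZMod 2) :
    (∑ x ∈ s, if c then f x else 0) = if c then ∑ x ∈ s, f x else 0 := by
  split <;> simp

lemma merge3 {ι : Type*} (s : Finset ι) (f g A B1 B2 : ι → ZMod 2)
    (h : ∀ i ∈ s, f i + g i = A i + (B1 i + B2 i)) :
    ((∑ i ∈ s, f i) + ∑ i ∈ s, g i)
      = (∑ i ∈ s, A i) + ((∑ i ∈ s, B1 i) + ∑ i ∈ s, B2 i) := by
  rw [← Finset.sum_add_distrib, Finset.sum_congr rfl h, Finset.sum_add_distrib,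
    Finset.sum_add_distrib]

lemma key (Pc : Fin q → Fin q → ZMod 2) (r : ZMod L) (α : Fin q)
    (b : (ZMod L × Fin q) → ZMod 2) :
    (∑ r' : ZMod L, ∑ l : Fin q, ∑ k ∈ Finset.univ.filter (fun k : Fin q => k < l),
        Pc k l * (b (r' + 1, k) + b (r', k)) * b (r', l))
    + (∑ r' : ZMod L, ∑ l : Fin q, ∑ k ∈ Finset.univ.filter (fun k : Fin q => k < l),
        Pc k l * ((b (r' + 1, k) + (if (r' + 1, k) = (r, α) then 1 else 0))
            + (b (r', k) + (if (r', k) = (r, α) then 1 else 0)))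
          * (b (r', l) + (if (r', l) = (r, α) then 1 else 0)))
    = (∑ k ∈ Finset.univ.filter (fun k : Fin q => k < α),
        Pc k α * (b (r + 1, k) + b (r, k)))
      + ∑ l ∈ Finset.univ.filter (fun l : Fin q => α < l),
        Pc α l * (b (r, l) + b (r - 1, l)) := by
  have hstep : ∀ (r' : ZMod L) (l : Fin q), ∀ k ∈ Finset.univ.filter (fun k : Fin q => k < l),
      (Pc k l * (b (r' + 1, k) + b (r', k)) * b (r', l)
      + Pc k l * ((b (r' + 1, k) + (if (r' + 1, k) = (r, α) then 1 else 0))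
            + (b (r', k) + (if (r', k) = (r, α) then 1 else 0)))
          * (b (r', l) + (if (r', l) = (r, α) then 1 else 0)))
      = Pc k l * (b (r' + 1, k) + b (r', k)) * (if (r', l) = (r, α) then 1 else 0)
        + (Pc k l * (if (r' + 1, k) = (r, α) then 1 else 0) * b (r', l)
           + Pc k l * (if (r', k) = (r, α) then 1 else 0) * b (r', l)) := by
    intro r' l k hk
    have hkl : k < l := by simpa using hk
    apply z2_aux
    · split_ifs with h1 h2
      · exfalso
        have e1 : k = α := congrArg Prod.snd h1
        have e2 : l = α := congrArg Prod.snd h2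
        rw [e1, e2] at hkl
        exact lt_irrefl α hkl
      all_goals simp
    · split_ifs with h1 h2
      · exfalso
        have e1 : k = α := congrArg Prod.snd h1
        have e2 : l = α := congrArg Prod.snd h2
        rw [e1, e2] at hkl
        exact lt_irrefl α hkl
      all_goals simp
  have hmerge :
      (∑ r' : ZMod L, ∑ l : Fin q, ∑ k ∈ Finset.univ.filter (fun k : Fin q => k < l),
        Pc k l * (b (r' + 1, k) + b (r', k)) * b (r', l))
      + (∑ r' : ZMod L, ∑ l : Fin q, ∑ k ∈ Finset.univ.filter (fun k : Fin q => k < l),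
        Pc k l * ((b (r' + 1, k) + (if (r' + 1, k) = (r, α) then 1 else 0))
            + (b (r', k) + (if (r', k) = (r, α) then 1 else 0)))
          * (b (r', l) + (if (r', l) = (r, α) then 1 else 0)))
      = (∑ r' : ZMod L, ∑ l : Fin q, ∑ k ∈ Finset.univ.filter (fun k : Fin q => k < l),
          Pc k l * (b (r' + 1, k) + b (r', k)) * (if (r', l) = (r, α) then 1 else 0))
        + ((∑ r' : ZMod L, ∑ l : Fin q, ∑ k ∈ Finset.univ.filter (fun k : Fin q => k < l),
            Pc k l * (if (r' + 1, k) = (r, α) then 1 else 0) * b (r', l))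
          + (∑ r' : ZMod L, ∑ l : Fin q, ∑ k ∈ Finset.univ.filter (fun k : Fin q => k < l),
            Pc k l * (if (r', k) = (r, α) then 1 else 0) * b (r', l))) := by
    exact merge3 _ _ _ _ _ _ (fun r' _ => merge3 _ _ _ _ _ _ (fun l _ =>
      merge3 _ _ _ _ _ _ (hstep r' l)))
  have hSA : (∑ r' : ZMod L, ∑ l : Fin q, ∑ k ∈ Finset.univ.filter (fun k : Fin q => k < l),
        Pc k l * (b (r' + 1, k) + b (r', k)) * (if (r', l) = (r, α) then 1 else 0))
      = ∑ k ∈ Finset.univ.filter (fun k : Fin q => k < α),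
          Pc k α * (b (r + 1, k) + b (r, k)) := by
    simp only [Prod.mk.injEq, mul_ite, mul_one, mul_zero, ite_and, sum_ite_const,
      Finset.sum_ite_eq', Finset.mem_univ, if_true]
  have hSB1 : (∑ r' : ZMod L, ∑ l : Fin q, ∑ k ∈ Finset.univ.filter (fun k : Fin q => k < l),
        Pc k l * (if (r' + 1, k) = (r, α) then 1 else 0) * b (r', l))
      = ∑ l : Fin q, if α < l then Pc α l * b (r - 1, l) else 0 := by
    simp only [Prod.mk.injEq, ← eq_sub_iff_add_eq, mul_ite, ite_mul, mul_one, mul_zero,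
      zero_mul, ite_and, sum_ite_const, Finset.sum_ite_eq', Finset.mem_univ, if_true,
      Finset.mem_filter, true_and]
  have hSB2 : (∑ r' : ZMod L, ∑ l : Fin q, ∑ k ∈ Finset.univ.filter (fun k : Fin q => k < l),
        Pc k l * (if (r', k) = (r, α) then 1 else 0) * b (r', l))
      = ∑ l : Fin q, if α < l then Pc α l * b (r, l) else 0 := by
    simp only [Prod.mk.injEq, mul_ite, ite_mul, mul_one, mul_zero,
      zero_mul, ite_and, sum_ite_const, Finset.sum_ite_eq', Finset.mem_univ, if_true,
      Finset.mem_filter, true_and]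
  rw [hmerge, hSA, hSB1, hSB2]
  have hrhs : (∑ l ∈ Finset.univ.filter (fun l : Fin q => α < l),
        Pc α l * (b (r, l) + b (r - 1, l)))
      = (∑ l : Fin q, if α < l then Pc α l * b (r - 1, l) else 0)
        + ∑ l : Fin q, if α < l then Pc α l * b (r, l) else 0 := by
    rw [Finset.sum_filter, ← Finset.sum_add_distrib]
    refine Finset.sum_congr rfl fun l _ => ?_
    split
    · ring
    · simp
  rw [hrhs]


def Gexp (P : Fin q → Fin q → ℕ) (x : Cfg L q) : ℕ :=
  ∑ r' : ZMod L, ∑ l : Fin q, ∑ k ∈ Finset.univ.filter (fun k : Fin q => k < l),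
    P k l * ((x (r' + 1, k) : ℕ) + (x (r', k) : ℕ)) * (x (r', l) : ℕ)

lemma flip_cast (r : ZMod L) (α : Fin q) (x : Cfg L q) (s : ZMod L × Fin q) :
    (((flipS (r, α) x) s : ℕ) : ZMod 2)
      = ((x s : ℕ) : ZMod 2) + (if s = (r, α) then 1 else 0) := by
  by_cases h : s = (r, α)
  · rw [if_pos h, h]
    show (((Function.update x (r, α) (1 - x (r, α))) (r, α) : ℕ) : ZMod 2) = _
    rw [Function.update_self]
    have h1 : ∀ a : Fin 2, (((1 - a : Fin 2) : ℕ) : ZMod 2) = ((a : ℕ) : ZMod 2) + 1 := by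
      decide
    exact h1 (x (r, α))
  · rw [if_neg h, add_zero]
    show (((Function.update x (r, α) (1 - x (r, α))) s : ℕ) : ZMod 2) = _
    rw [Function.update_of_ne h]

lemma core (P : Fin q → Fin q → ℕ) (r : ZMod L) (α : Fin q) (x : Cfg L q) :
    ((Gexp P x : ℕ) : ZMod 2) + ((Gexp P (flipS (r, α) x) : ℕ) : ZMod 2)
      = ((Eexp P r α x : ℕ) : ZMod 2) := by
  have hG : ∀ y : Cfg L q, ((Gexp P y : ℕ) : ZMod 2)
      = ∑ r' : ZMod L, ∑ l : Fin q, ∑ k ∈ Finset.univ.filter (fun k : Fin q => k < l),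
          (P k l : ZMod 2) * (((y (r' + 1, k) : ℕ) : ZMod 2) + ((y (r', k) : ℕ) : ZMod 2))
            * ((y (r', l) : ℕ) : ZMod 2) := by
    intro y
    rw [Gexp]
    push_cast
    rfl
  have hE : ((Eexp P r α x : ℕ) : ZMod 2)
      = (∑ k ∈ Finset.univ.filter (fun k : Fin q => k < α),
          (P k α : ZMod 2) * (((x (r + 1, k) : ℕ) : ZMod 2) + ((x (r, k) : ℕ) : ZMod 2)))
        + ∑ l ∈ Finset.univ.filter (fun l : Fin q => α < l),
          (P α l : ZMod 2) * (((x (r, l) : ℕ) : ZMod 2) + ((x (r - 1, l) : ℕ) : ZMod 2)) := by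
    rw [Eexp]
    push_cast
    rfl
  rw [hG, hG, hE]
  simp only [flip_cast]
  exact key (fun k l => (P k l : ZMod 2)) r α (fun s => ((x s : ℕ) : ZMod 2))

lemma neg_one_pow_congr_z2 {m n : ℕ} (h : (m : ZMod 2) = (n : ZMod 2)) :
    (-1 : ℂ) ^ m = (-1 : ℂ) ^ n := by
  have hmod : m % 2 = n % 2 := by
    have := (ZMod.natCast_eq_natCast_iff m n 2).mp h
    exact this
  rcases Nat.even_or_odd m with hm | hm
  · have hn : Even n := by
      rw [Nat.even_iff] at hm ⊢
      omega
    rw [hm.neg_one_pow, hn.neg_one_pow]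
  · have hn : Odd n := by
      rw [Nat.odd_iff] at hm ⊢
      omega
    rw [hm.neg_one_pow, hn.neg_one_pow]

noncomputable def gsvec (P : Fin q → Fin q → ℕ) : Cfg L q → ℂ :=
  fun x => (-1 : ℂ) ^ (Gexp P x)

lemma gsvec_ne_zero (P : Fin q → Fin q → ℕ) : gsvec (L := L) (q := q) P ≠ 0 := by
  intro h
  have := congrFun h (fun _ => 0)
  exact pow_ne_zero _ (by norm_num : (-1 : ℂ) ≠ 0) this

lemma gsvec_eigen (P : Fin q → Fin q → ℕ) (r : ZMod L) (α : Fin q) (x : Cfg L q) :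
    (-1 : ℂ) ^ (Eexp P r α x) * gsvec P (flipS (r, α) x) = gsvec P x := by
  rw [gsvec, gsvec, ← pow_add]
  apply neg_one_pow_congr_z2
  have h := core P r α x
  have h2 : ∀ a : ZMod 2, a + a = 0 := by decide
  push_cast
  push_cast at h
  rw [← h, add_assoc, h2, add_zero]

lemma gsvec_mulVec (P : Fin q → Fin q → ℕ) (r : ZMod L) (α : Fin q) :
    (Ocal L q P r α).mulVec (gsvec P) = gsvec P := by
  rw [Ocal_mulVec]
  funext x
  exact gsvec_eigen P r α x

lemma span_eq (P : Fin q → Fin q → ℕ) :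
    (⨅ p : ZMod L × Fin q,
        Module.End.eigenspace (Ocal L q P p.1 p.2).mulVecLin 1)
      = Submodule.span ℂ {gsvec (L := L) (q := q) P} := by
  have gsq : ∀ y : Cfg L q, gsvec (L := L) (q := q) P y * gsvec P y = 1 := by
    intro y
    show (-1 : ℂ) ^ (Gexp P y) * (-1 : ℂ) ^ (Gexp P y) = 1
    rw [← pow_add]
    have hz : ((Gexp P y + Gexp P y : ℕ) : ZMod 2) = ((0 : ℕ) : ZMod 2) := by
      push_cast
      exact (by decide : ∀ a : ZMod 2, a + a = 0) _
    rw [neg_one_pow_congr_z2 hz, pow_zero]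
  apply le_antisymm
  · intro v hv
    have hvp : ∀ p : ZMod L × Fin q, (Ocal L q P p.1 p.2).mulVec v = v := by
      intro p
      have h1 := (Submodule.mem_iInf _).mp hv p
      rw [Module.End.mem_eigenspace_iff, one_smul] at h1
      rw [← Matrix.mulVecLin_apply]
      exact h1
    set w : Cfg L q → ℂ := fun x => v x * gsvec P x with hwdef
    have hflip : ∀ (s : ZMod L × Fin q) (x : Cfg L q), w (flipS s x) = w x := by
      intro s x
      have h1 : (-1 : ℂ) ^ (Eexp P s.1 s.2 x) * v (flipS s x) = v x :=
        (congrFun (Ocal_mulVec P s.1 s.2 v) x).symm.trans (congrFun (hvp s) x)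
      have h2 : (-1 : ℂ) ^ (Eexp P s.1 s.2 x) * gsvec P (flipS s x) = gsvec P x :=
        gsvec_eigen P s.1 s.2 x
      have hsq : (-1 : ℂ) ^ (Eexp P s.1 s.2 x) * (-1 : ℂ) ^ (Eexp P s.1 s.2 x) = 1 := by
        rw [← pow_add]
        have hz : ((Eexp P s.1 s.2 x + Eexp P s.1 s.2 x : ℕ) : ZMod 2)
            = ((0 : ℕ) : ZMod 2) := by
          push_cast
          exact (by decide : ∀ a : ZMod 2, a + a = 0) _
        rw [neg_one_pow_congr_z2 hz, pow_zero]
      show v (flipS s x) * gsvec P (flipS s x) = v x * gsvec P x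
      rw [← h1, ← h2, mul_mul_mul_comm, hsq, one_mul]
    have hconst : ∀ (n : ℕ) (x : Cfg L q),
        (∑ t : ZMod L × Fin q, ((x t : ℕ))) = n → w x = w (fun _ => 0) := by
      intro n
      induction n using Nat.strong_induction_on with
      | _ n ih =>
        intro x hx
        by_cases h0 : ∀ t, x t = 0
        · have hx0 : x = fun _ => 0 := funext h0
          rw [hx0]
        · push_neg at h0
          obtain ⟨s, hs⟩ := h0
          have hs1 : x s = 1 := (by decide : ∀ a : Fin 2, a ≠ 0 → a = 1) _ hs
          have hys : flipS s x s = 0 := by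
            show Function.update x s (1 - x s) s = 0
            rw [Function.update_self, hs1]
            rfl
          have hyt : ∀ t, t ≠ s → flipS s x t = x t := by
            intro t ht
            exact Function.update_of_ne ht _ _
          have hsum : (∑ t : ZMod L × Fin q, ((flipS s x t : ℕ))) + 1 = n := by
            rw [← hx,
              ← Finset.add_sum_erase Finset.univ (fun t => ((flipS s x t : ℕ)))
                (Finset.mem_univ s),
              ← Finset.add_sum_erase Finset.univ (fun t => ((x t : ℕ)))
                (Finset.mem_univ s)]
            have he : ∑ t ∈ Finset.univ.erase s, ((flipS s x t : ℕ))
                = ∑ t ∈ Finset.univ.erase s, ((x t : ℕ)) := by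
              refine Finset.sum_congr rfl fun t ht => ?_
              rw [hyt t (Finset.ne_of_mem_erase ht)]
            rw [he, hys, hs1]
            simp only [Fin.val_zero, Fin.val_one]
            omega
          have hlt : (∑ t : ZMod L × Fin q, ((flipS s x t : ℕ))) < n := by omega
          have hw1 := ih _ hlt (flipS s x) rfl
          rw [← hflip s x, hw1]
    rw [Submodule.mem_span_singleton]
    refine ⟨w (fun _ => 0), ?_⟩
    funext x
    have hx := hconst _ x rfl
    show w (fun _ => 0) * gsvec P x = v x
    rw [← hx]
    show (v x * gsvec P x) * gsvec P x = v x
    rw [mul_assoc, gsq, mul_one]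
  · rw [Submodule.span_le, Set.singleton_subset_iff]
    refine (Submodule.mem_iInf _).mpr fun p => ?_
    rw [Module.End.mem_eigenspace_iff, one_smul]
    show (Ocal L q P p.1 p.2).mulVecLin (gsvec P) = gsvec P
    rw [Matrix.mulVecLin_apply]
    exact gsvec_mulVec P p.1 p.2

end Aux

/-- The `qL` cocycle stabilizers are independent in the Pauli group (no nonempty
product of a subset is a scalar multiple of the identity); consequently their
common `+1` eigenspace — the ground space of `H = −∑ O^r_α` — is
one-dimensional. -/
theorem cocycle_stabilizers_independent_unique_gs (L q : ℕ) [NeZero L]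
    (P : Fin q → Fin q → ℕ) (hP : ∀ i j, P i j ≤ 1) :
    (∀ s : Finset (ZMod L × Fin q), s.Nonempty → ∀ cph : ℂ,
      (s.toList.map (fun p => Ocal L q P p.1 p.2)).prod ≠
        cph • (1 : Matrix ((ZMod L × Fin q) → Fin 2) ((ZMod L × Fin q) → Fin 2) ℂ)) ∧
    Module.finrank ℂ
      ↥(⨅ p : ZMod L × Fin q,
        Module.End.eigenspace (Ocal L q P p.1 p.2).mulVecLin 1) = 1 := by
  constructor
  · exact fun s hs cph => part1 P s hs cph
  · rw [span_eq P]
    exact finrank_span_singleton (gsvec_ne_zero P)
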